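/- Let C be a class of finite-dimensional A-modules that is closed under direct sums and contains kernels of evaluation morphisms, and let M and N be modules in C such that dim Hom_A(M,X) = dim Hom_A(N,X) for every X in C. Then the evaluation morphism ev[M][N] : M ⊗_k Hom_A(M,N) → N is a split surjection; in particular, N is a direct summand of M^n, where n = dim Hom_A(M,N). -/

import Mathlib

open TensorProduct

/-- The evaluation morphism `ev[M][N] : M ⊗_k Hom_A(M,N) → N`, `m ⊗ f ↦ f m`.  It is
`A`-linear for the `A`-module structure on the tensor product coming from the `A`-action
on the first factor. -/
noncomputable def evMod (k : Type*) {A : Type*} [Field k] [Ring A] [Algebra k A]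
    (M N : Type*) [AddCommGroup M] [Module k M] [Module A M] [IsScalarTower k A M]
    [AddCommGroup N] [Module k N] [Module A N] [IsScalarTower k A N] :
    (M ⊗[k] (M →ₗ[A] N)) →ₗ[A] N where
  toFun := TensorProduct.lift (LinearMap.mk₂ k (fun m (f : M →ₗ[A] N) => f m)
    (fun m₁ m₂ f => map_add f m₁ m₂)
    (fun c m f => f.map_smul_of_tower c m)
    (fun m f g => rfl)
    (fun c m f => rfl))
  map_add' := map_add _
  map_smul' := fun a x => by
    induction x using TensorProduct.induction_on with
    | zero => simp
    | tmul m f => rw [TensorProduct.smul_tmul']; simp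
    | add u v hu hv =>
      simp only [smul_add, map_add]
      exact congrArg₂ (· + ·) hu hv

section Aux

variable (k A : Type*) [Field k] [Ring A] [Algebra k A]

variable {Y T Z X X' : Type*}
  [AddCommGroup Y] [Module k Y] [Module A Y] [IsScalarTower k A Y]
  [AddCommGroup T] [Module k T] [Module A T] [IsScalarTower k A T]
  [AddCommGroup Z] [Module k Z] [Module A Z] [IsScalarTower k A Z]
  [AddCommGroup X] [Module k X] [Module A X] [IsScalarTower k A X]
  [AddCommGroup X'] [Module k X'] [Module A X'] [IsScalarTower k A X']

/-- Postcomposition with an `A`-linear map, as a `k`-linear map on hom spaces. -/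
def postcomp (g : T →ₗ[A] Z) : (Y →ₗ[A] T) →ₗ[k] (Y →ₗ[A] Z) where
  toFun f := g ∘ₗ f
  map_add' f₁ f₂ := by ext y; simp
  map_smul' c f := by ext y; simp

/-- The kernel of `postcomp g` is `Hom(Y, ker g)`. -/
noncomputable def kerPostcompEquiv (g : T →ₗ[A] Z) :
    ↥(LinearMap.ker (postcomp k A (Y := Y) g)) ≃ₗ[k] (Y →ₗ[A] ↥(LinearMap.ker g)) where
  toFun f := LinearMap.codRestrict (LinearMap.ker g) f.1 fun y => by
    have h : g ∘ₗ f.1 = 0 := f.2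
    exact LinearMap.mem_ker.mpr (LinearMap.ext_iff.mp h y)
  map_add' f₁ f₂ := by ext y; rfl
  map_smul' c f := by ext y; rfl
  invFun h := ⟨(LinearMap.ker g).subtype ∘ₗ h, by
    rw [LinearMap.mem_ker]
    ext y
    exact LinearMap.mem_ker.mp (h y).2⟩
  left_inv f := by ext y; rfl
  right_inv h := by ext y; rfl

/-- Postcomposition with an `A`-linear equivalence gives a `k`-linear equivalence of
hom spaces. -/
noncomputable def homCongrRight (e : X ≃ₗ[A] X') :
    (Y →ₗ[A] X) ≃ₗ[k] (Y →ₗ[A] X') where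
  toFun f := e.toLinearMap ∘ₗ f
  invFun f := e.symm.toLinearMap ∘ₗ f
  map_add' f₁ f₂ := by ext y; simp
  map_smul' c f := by
    ext y
    simp only [LinearMap.coe_comp, Function.comp_apply, LinearMap.smul_apply,
      LinearEquiv.coe_coe]
    exact (e : X →ₗ[A] X').map_smul_of_tower c (f y)
  left_inv f := by ext y; simp
  right_inv f := by ext y; simp

/-- `Hom(Y, T^n) ≃ Hom(Y,T)^n`. -/
noncomputable def homPiEquiv (n : ℕ) :
    (Y →ₗ[A] (Fin n → T)) ≃ₗ[k] (Fin n → (Y →ₗ[A] T)) where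
  toFun f t := LinearMap.proj t ∘ₗ f
  invFun g := LinearMap.pi g
  map_add' f₁ f₂ := by funext t; ext y; rfl
  map_smul' c f := by funext t; ext y; rfl
  left_inv f := by ext y; rfl
  right_inv g := by funext t; ext y; rfl

theorem homFD [FiniteDimensional k Y] [FiniteDimensional k T] :
    FiniteDimensional k (Y →ₗ[A] T) :=
  FiniteDimensional.of_injective (LinearMap.restrictScalarsₗ k A Y T k)
    (LinearMap.restrictScalars_injective k)

theorem finrank_hom_pi (n : ℕ) [FiniteDimensional k (Y →ₗ[A] T)] :
    Module.finrank k (Y →ₗ[A] (Fin n → T)) = n * Module.finrank k (Y →ₗ[A] T) := by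
  rw [(homPiEquiv k A (Y := Y) (T := T) n).finrank_eq, Module.finrank_pi_fintype]
  simp [Finset.sum_const]

end Aux

section Tens

variable (k A : Type*) [Field k] [Ring A] [Algebra k A]
variable (M : Type*) [AddCommGroup M] [Module k M] [Module A M] [IsScalarTower k A M]
variable {W : Type*} [AddCommGroup W] [Module k W]

/-- `M ⊗ W → M^n` given a basis of `W`. -/
noncomputable def tensorFinMap {n : ℕ} (b : Module.Basis (Fin n) k W) :
    (M ⊗[k] W) →ₗ[A] (Fin n → M) where
  toFun := TensorProduct.lift (LinearMap.mk₂ k (fun m w => fun t => b.repr w t • m)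
    (fun m₁ m₂ w => by funext t; simp [smul_add])
    (fun c m w => by funext t; rw [Pi.smul_apply]; exact smul_comm _ _ _)
    (fun m w₁ w₂ => by funext t; simp [add_smul])
    (fun c m w => by funext t; simp [mul_smul]))
  map_add' := map_add _
  map_smul' := fun a x => by
    induction x using TensorProduct.induction_on with
    | zero => simp
    | tmul m w =>
      rw [TensorProduct.smul_tmul']
      simp only [TensorProduct.lift.tmul, LinearMap.mk₂_apply, RingHom.id_apply]
      funext t
      rw [Pi.smul_apply]
      exact smul_comm _ _ _
    | add u v hu hv =>
      simp only [smul_add, map_add]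
      exact congrArg₂ (· + ·) hu hv

/-- `M^n → M ⊗ W` given a basis of `W`. -/
noncomputable def finTensorMap {n : ℕ} (b : Module.Basis (Fin n) k W) :
    (Fin n → M) →ₗ[A] (M ⊗[k] W) where
  toFun v := ∑ t, v t ⊗ₜ[k] b t
  map_add' u v := by simp [TensorProduct.add_tmul, Finset.sum_add_distrib]
  map_smul' a v := by simp [TensorProduct.smul_tmul', Finset.smul_sum]

/-- `M ⊗ W ≅ M^n` as `A`-modules, given a basis of `W`. -/
noncomputable def tensorFinEquiv {n : ℕ} (b : Module.Basis (Fin n) k W) :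
    (M ⊗[k] W) ≃ₗ[A] (Fin n → M) :=
  LinearEquiv.ofLinear (tensorFinMap k A M b) (finTensorMap k A M b)
    (by
      refine LinearMap.ext fun v => ?_
      funext t
      simp [tensorFinMap, finTensorMap, Module.Basis.repr_self, Finsupp.single_apply,
        ite_smul, Finset.sum_ite_eq])
    (by
      refine LinearMap.ext fun x => ?_
      simp only [LinearMap.comp_apply, LinearMap.id_apply]
      induction x using TensorProduct.induction_on with
      | zero => simp
      | tmul m w =>
        show finTensorMap k A M b (tensorFinMap k A M b (m ⊗ₜ[k] w)) = m ⊗ₜ[k] w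
        simp only [tensorFinMap, finTensorMap, LinearMap.coe_mk, AddHom.coe_mk,
          TensorProduct.lift.tmul, LinearMap.mk₂_apply]
        conv_rhs => rw [← b.sum_repr w]
        rw [TensorProduct.tmul_sum]
        exact Finset.sum_congr rfl fun t _ => TensorProduct.smul_tmul _ _ _
      | add u v hu hv => simp only [map_add, hu, hv])

end Tens

set_option maxSynthPendingDepth 3 in
set_option maxHeartbeats 1000000 in
/-- Let `C` be a class of finite-dimensional `A`-modules (encoded as a
family `V : ι → Type`) closed under direct sums and containing kernels of evaluation
morphisms, and let `M = V i`, `N = V j` in `C` satisfy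
`dim Hom_A(M,X) = dim Hom_A(N,X)` for every `X` in `C`.  Then the evaluation morphism
`ev[M][N] : M ⊗_k Hom_A(M,N) → N` is a split surjection; in particular `N` is a direct
summand of `M^n` with `n = dim Hom_A(M,N)`. -/
theorem ev_split_surjection (k A : Type*) [Field k] [Ring A] [Algebra k A]
    [FiniteDimensional k A]
    (ι : Type*) (V : ι → Type*)
    [∀ i, AddCommGroup (V i)] [∀ i, Module k (V i)] [∀ i, Module A (V i)]
    [∀ i, IsScalarTower k A (V i)] [∀ i, FiniteDimensional k (V i)]
    (hds : ∀ i j : ι, ∃ l : ι, Nonempty ((V i × V j) ≃ₗ[A] V l))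
    (hker : ∀ i j : ι, ∃ l : ι,
      Nonempty ((↥(LinearMap.ker (evMod (A := A) k (V i) (V j)))) ≃ₗ[A] V l))
    (i j : ι)
    (hdim : ∀ l : ι,
      Module.finrank k (V i →ₗ[A] V l) = Module.finrank k (V j →ₗ[A] V l)) :
    (∃ s : V j →ₗ[A] (V i ⊗[k] (V i →ₗ[A] V j)),
      (evMod (A := A) k (V i) (V j)) ∘ₗ s = LinearMap.id) ∧
    (∃ (g : (Fin (Module.finrank k (V i →ₗ[A] V j)) → V i) →ₗ[A] V j)
       (s : V j →ₗ[A] (Fin (Module.finrank k (V i →ₗ[A] V j)) → V i)),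
      g ∘ₗ s = LinearMap.id) := by
  classical
  obtain ⟨l, ⟨e⟩⟩ := hker i j
  haveI : FiniteDimensional k (V i →ₗ[A] V j) := homFD k A
  haveI : FiniteDimensional k (V i →ₗ[A] V i) := homFD k A
  haveI : FiniteDimensional k (V j →ₗ[A] V j) := homFD k A
  haveI : FiniteDimensional k (V j →ₗ[A] V i) := homFD k A
  haveI : FiniteDimensional k (V i ⊗[k] (V i →ₗ[A] V j)) :=
    Module.Finite.tensorProduct k _ _
  haveI : FiniteDimensional k (V i →ₗ[A] (V i ⊗[k] (V i →ₗ[A] V j))) := homFD k A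
  haveI : FiniteDimensional k (V j →ₗ[A] (V i ⊗[k] (V i →ₗ[A] V j))) := homFD k A
  set n := Module.finrank k (V i →ₗ[A] V j) with hn
  let b : Module.Basis (Fin n) k (V i →ₗ[A] V j) := Module.finBasis k _
  let E : (V i ⊗[k] (V i →ₗ[A] V j)) ≃ₗ[A] (Fin n → V i) := tensorFinEquiv k A (V i) b
  set ev := evMod (A := A) k (V i) (V j) with hev
  -- Ψ := postcomp ev on Hom(V i, -) is surjective
  have hΨsurj : Function.Surjective (postcomp k A (Y := V i) ev) := by
    intro f
    refine ⟨{ toFun := fun m => m ⊗ₜ[k] f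
              map_add' := fun m₁ m₂ => TensorProduct.add_tmul m₁ m₂ f
              map_smul' := fun a m => (TensorProduct.smul_tmul' a m f).symm }, ?_⟩
    ext m
    simp [postcomp, hev, evMod]
  -- rank-nullity for Ψ
  have eq1 : n + Module.finrank k (V i →ₗ[A] V l)
      = Module.finrank k (V i →ₗ[A] (V i ⊗[k] (V i →ₗ[A] V j))) := by
    have h := LinearMap.finrank_range_add_finrank_ker (postcomp k A (Y := V i) ev)
    rw [LinearMap.range_eq_top.mpr hΨsurj, finrank_top,
      (kerPostcompEquiv k A (Y := V i) ev).finrank_eq,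
      (homCongrRight k A (Y := V i) e).finrank_eq] at h
    exact h
  -- rank-nullity for Φ := postcomp ev on Hom(V j, -)
  have eq2 : Module.finrank k ↥(LinearMap.range (postcomp k A (Y := V j) ev))
      + Module.finrank k (V j →ₗ[A] V l)
      = Module.finrank k (V j →ₗ[A] (V i ⊗[k] (V i →ₗ[A] V j))) := by
    have h := LinearMap.finrank_range_add_finrank_ker (postcomp k A (Y := V j) ev)
    rw [(kerPostcompEquiv k A (Y := V j) ev).finrank_eq,
      (homCongrRight k A (Y := V j) e).finrank_eq] at h
    exact h
  -- the two hom spaces into the tensor product have the same dimension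
  have hTT : Module.finrank k (V i →ₗ[A] (V i ⊗[k] (V i →ₗ[A] V j)))
      = Module.finrank k (V j →ₗ[A] (V i ⊗[k] (V i →ₗ[A] V j))) := by
    rw [(homCongrRight k A (Y := V i) E).finrank_eq,
      (homCongrRight k A (Y := V j) E).finrank_eq,
      finrank_hom_pi k A, finrank_hom_pi k A, hdim i]
  -- Φ is surjective
  have hΦrank : Module.finrank k ↥(LinearMap.range (postcomp k A (Y := V j) ev))
      = Module.finrank k (V j →ₗ[A] V j) := by
    have h1 := hdim l
    have h2 := hdim j
    omega
  have hΦtop : LinearMap.range (postcomp k A (Y := V j) ev) = ⊤ :=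
    Submodule.eq_top_of_finrank_eq hΦrank
  obtain ⟨s, hs⟩ := LinearMap.range_eq_top.mp hΦtop (LinearMap.id (M := V j))
  have hs' : ev ∘ₗ s = LinearMap.id := hs
  constructor
  · exact ⟨s, hs'⟩
  · refine ⟨ev ∘ₗ E.symm.toLinearMap, E.toLinearMap ∘ₗ s, ?_⟩
    ext x
    have h := LinearMap.ext_iff.mp hs' x
    simp only [LinearMap.comp_apply, LinearEquiv.coe_coe, LinearEquiv.symm_apply_apply,
      LinearMap.id_apply] at h ⊢
    exact h
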